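/- Let K₀ be a real N₀ × d_x matrix, K_b a real N_b × d_x matrix, V₀ a real N₀ × d_y matrix, and V_b a real N_b × d_y matrix, with N₀, N_b ≥ 1. Suppose there exists c > 0 such that K₀ᵀ K₀ = N₀ c · I_{d_x} and K_bᵀ K_b = N_b c · I_{d_x}. Let W₀ = (K₀ᵀ K₀)⁻¹ K₀ᵀ V₀ and W_b = (K_bᵀ K_b)⁻¹ K_bᵀ V_b be the per-batch least-squares solutions, and let K and V be the stacked key and value matrices of the combined data. Then the combined least-squares solution (Kᵀ K)⁻¹ Kᵀ V equals the count-weighted average (N₀ / (N₀ + N_b)) W₀ + (N_b / (N₀ + N_b)) W_b. -/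

import Mathlib

open Matrix

/-- if `K₀ᵀ K₀ = N₀ c · I` and `K_bᵀ K_b = N_b c · I` with `c > 0` and
`N₀, N_b ≥ 1`, then the least-squares solution for the stacked data equals the
count-weighted average of the per-batch least-squares solutions:
`(Kᵀ K)⁻¹ Kᵀ V = (N₀/(N₀+N_b)) W₀ + (N_b/(N₀+N_b)) W_b`. -/
theorem count_weighted_fast_weight_average (N0 Nb dx dy : ℕ)
    (hN0 : 1 ≤ N0) (hNb : 1 ≤ Nb)
    (K0 : Matrix (Fin N0) (Fin dx) ℝ) (Kb : Matrix (Fin Nb) (Fin dx) ℝ)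
    (V0 : Matrix (Fin N0) (Fin dy) ℝ) (Vb : Matrix (Fin Nb) (Fin dy) ℝ)
    (c : ℝ) (hc : 0 < c)
    (hK0 : K0ᵀ * K0 = ((N0 : ℝ) * c) • (1 : Matrix (Fin dx) (Fin dx) ℝ))
    (hKb : Kbᵀ * Kb = ((Nb : ℝ) * c) • (1 : Matrix (Fin dx) (Fin dx) ℝ))
    (W0 Wb : Matrix (Fin dx) (Fin dy) ℝ)
    (hW0 : W0 = (K0ᵀ * K0)⁻¹ * (K0ᵀ * V0))
    (hWb : Wb = (Kbᵀ * Kb)⁻¹ * (Kbᵀ * Vb))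
    (K : Matrix (Fin N0 ⊕ Fin Nb) (Fin dx) ℝ) (hK : K = Matrix.fromRows K0 Kb)
    (V : Matrix (Fin N0 ⊕ Fin Nb) (Fin dy) ℝ) (hV : V = Matrix.fromRows V0 Vb) :
    (Kᵀ * K)⁻¹ * (Kᵀ * V) =
      ((N0 : ℝ) / ((N0 : ℝ) + (Nb : ℝ))) • W0 +
        ((Nb : ℝ) / ((N0 : ℝ) + (Nb : ℝ))) • Wb := by
  subst hK hV hW0 hWb
  have hN0' : (N0 : ℝ) ≠ 0 := Nat.cast_ne_zero.mpr (by omega)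
  have hNb' : (Nb : ℝ) ≠ 0 := Nat.cast_ne_zero.mpr (by omega)
  have hc' : c ≠ 0 := ne_of_gt hc
  have hsum : (N0 : ℝ) + (Nb : ℝ) ≠ 0 := by positivity
  have hinv : ∀ a : ℝ, a ≠ 0 →
      ((a • (1 : Matrix (Fin dx) (Fin dx) ℝ))⁻¹ = a⁻¹ • 1) := by
    intro a ha
    apply Matrix.inv_eq_right_inv
    rw [Matrix.smul_mul, Matrix.mul_smul, one_mul, smul_smul, mul_inv_cancel₀ ha, one_smul]
  have hKK : (Matrix.fromRows K0 Kb)ᵀ * Matrix.fromRows K0 Kb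
      = (((N0 : ℝ) + (Nb : ℝ)) * c) • (1 : Matrix (Fin dx) (Fin dx) ℝ) := by
    rw [Matrix.transpose_fromRows, Matrix.fromCols_mul_fromRows, hK0, hKb, ← add_smul]
    ring_nf
  have hKV : (Matrix.fromRows K0 Kb)ᵀ * Matrix.fromRows V0 Vb
      = K0ᵀ * V0 + Kbᵀ * Vb := by
    rw [Matrix.transpose_fromRows, Matrix.fromCols_mul_fromRows]
  rw [hKK, hKV, hK0, hKb, hinv _ (by positivity), hinv _ (by positivity),
    hinv _ (by positivity), Matrix.smul_mul, Matrix.one_mul, smul_add,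
    Matrix.smul_mul, Matrix.smul_mul, Matrix.one_mul, Matrix.one_mul,
    smul_smul, smul_smul]
  congr 1
  · congr 1
    field_simp
  · congr 1
    field_simp
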